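/- Consider the 4×4 submatrix D of the Walsh matrix W_8 given by D = [[1,−1,−1,1],[−1,1,−1,1],[−1,−1,1,1],[1,1,1,−1]]. Then D is invertible, and its polar part U = Pol(D) has U_{44} = 0; explicitly U = [[2/3,−1/3,−1/3,1/√3],[−1/3,2/3,−1/3,1/√3],[−1/3,−1/3,2/3,1/√3],[1/√3,1/√3,1/√3,0]]. Consequently D is not an almost Hadamard sign pattern. -/

import Mathlib

open Matrix

set_option maxHeartbeats 1000000

open scoped ComplexOrder in
/-- The old Mathlib `Matrix.PosSemidef.sqrt` (removed upstream), restated with its former definition. -/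
noncomputable def Matrix.PosSemidef.sqrt {n 𝕜 : Type*} [Fintype n] [DecidableEq n] [RCLike 𝕜]
    {A : Matrix n n 𝕜} (hA : A.PosSemidef) : Matrix n n 𝕜 :=
  (hA.1.eigenvectorUnitary : Matrix n n 𝕜) * diagonal ((↑) ∘ Real.sqrt ∘ hA.1.eigenvalues) *
    (star hA.1.eigenvectorUnitary : Matrix n n 𝕜)

open Matrix

noncomputable def Smat : Matrix (Fin 4) (Fin 4) ℝ :=
  !![4/3 + Real.sqrt 3/3, -2/3 + Real.sqrt 3/3, -2/3 + Real.sqrt 3/3, -(Real.sqrt 3/3);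
     -2/3 + Real.sqrt 3/3, 4/3 + Real.sqrt 3/3, -2/3 + Real.sqrt 3/3, -(Real.sqrt 3/3);
     -2/3 + Real.sqrt 3/3, -2/3 + Real.sqrt 3/3, 4/3 + Real.sqrt 3/3, -(Real.sqrt 3/3);
     -(Real.sqrt 3/3), -(Real.sqrt 3/3), -(Real.sqrt 3/3), Real.sqrt 3]

lemma h3 : Real.sqrt 3 * Real.sqrt 3 = 3 := Real.mul_self_sqrt (by norm_num)

lemma h3ne : Real.sqrt 3 ≠ 0 := by positivity

lemma Smat_posSemidef : Smat.PosSemidef := by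
  refine Matrix.PosSemidef.of_dotProduct_mulVec_nonneg ?_ ?_
  · ext i j
    fin_cases i <;> fin_cases j <;> simp [Smat, Matrix.conjTranspose_apply]
  · intro x
    have h1 : (0:ℝ) ≤ Real.sqrt 3 := Real.sqrt_nonneg 3
    simp only [Smat, dotProduct, mulVec, Fin.sum_univ_four, star, Pi.star_apply, star_trivial]
    simp [Fin.isValue, Matrix.cons_val_zero, Matrix.cons_val_one]
    nlinarith [sq_nonneg (x 0 - x 1), sq_nonneg (x 1 - x 2), sq_nonneg (x 0 - x 2),
      mul_nonneg h1 (sq_nonneg (x 0 + x 1 + x 2 - x 3)),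
      mul_nonneg h1 (sq_nonneg (x 3))]

lemma Smat_sq :
    Smat ^ 2 = (!![1, -1, -1, 1; -1, 1, -1, 1; -1, -1, 1, 1; 1, 1, 1, -1] : Matrix (Fin 4) (Fin 4) ℝ)ᴴ
      * !![1, -1, -1, 1; -1, 1, -1, 1; -1, -1, 1, 1; 1, 1, 1, -1] := by
  rw [pow_two]
  ext i j
  fin_cases i <;> fin_cases j <;>
    simp [Smat, Matrix.mul_apply, Fin.sum_univ_four, Matrix.conjTranspose_apply, Matrix.vecHead, Matrix.vecTail] <;>
    nlinarith [h3]

open scoped MatrixOrder in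
lemma psd_sqrt_eq_of_mul_self_eq {A S : Matrix (Fin 4) (Fin 4) ℝ} (hA : A.PosSemidef)
    (hS : S.PosSemidef) (h : S * S = A) : Matrix.PosSemidef.sqrt hA = S := by
  have hA0 : 0 ≤ A := hA.nonneg
  have hS0 : 0 ≤ S := hS.nonneg
  have e1 : CFC.sqrt A = S := CFC.sqrt_unique h
  rw [CFC.sqrt_eq_real_sqrt A, cfcₙ_eq_cfc, hA.1.cfc_eq] at e1
  rw [← e1]
  simp [Matrix.IsHermitian.cfc, Matrix.PosSemidef.sqrt, Unitary.conjStarAlgAut_apply]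

/-- The `4×4` submatrix `D` of the Walsh matrix `W₈` given below is
invertible, its polar part
`U = [[2/3,−1/3,−1/3,1/√3],[−1/3,2/3,−1/3,1/√3],[−1/3,−1/3,2/3,1/√3],[1/√3,1/√3,1/√3,0]]`
(orthogonal, with `U·√(DᵗD) = D`) has `U₄₄ = 0`; consequently `D` is not an
almost Hadamard sign pattern (the sign condition `sgn(Uᵢⱼ) = Dᵢⱼ` fails). -/
theorem stmt_19 :
    letI D : Matrix (Fin 4) (Fin 4) ℝ :=
      !![1, -1, -1, 1; -1, 1, -1, 1; -1, -1, 1, 1; 1, 1, 1, -1]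
    letI U : Matrix (Fin 4) (Fin 4) ℝ :=
      !![2/3, -1/3, -1/3, (Real.sqrt 3)⁻¹;
         -1/3, 2/3, -1/3, (Real.sqrt 3)⁻¹;
         -1/3, -1/3, 2/3, (Real.sqrt 3)⁻¹;
         (Real.sqrt 3)⁻¹, (Real.sqrt 3)⁻¹, (Real.sqrt 3)⁻¹, 0]
    IsUnit D.det ∧ Uᵀ * U = 1 ∧
      D = U * Matrix.PosSemidef.sqrt (Matrix.posSemidef_conjTranspose_mul_self D) ∧
      U 3 3 = 0 ∧ ¬(∀ i j, Real.sign (U i j) = D i j) := by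
  have hsqrt : Matrix.PosSemidef.sqrt (Matrix.posSemidef_conjTranspose_mul_self
      (!![1, -1, -1, 1; -1, 1, -1, 1; -1, -1, 1, 1; 1, 1, 1, -1] : Matrix (Fin 4) (Fin 4) ℝ))
      = Smat :=
    psd_sqrt_eq_of_mul_self_eq _ Smat_posSemidef (by rw [← pow_two]; exact Smat_sq)
  refine ⟨?_, ?_, ?_, ?_, ?_⟩
  · have hmul : (!![1, -1, -1, 1; -1, 1, -1, 1; -1, -1, 1, 1; 1, 1, 1, -1] :
        Matrix (Fin 4) (Fin 4) ℝ) *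
        !![1/2, 0, 0, 1/2; 0, 1/2, 0, 1/2; 0, 0, 1/2, 1/2; 1/2, 1/2, 1/2, 1/2] = 1 := by
      ext i j
      fin_cases i <;> fin_cases j <;>
        norm_num [Matrix.mul_apply, Fin.sum_univ_four, Matrix.one_apply, Matrix.vecHead, Matrix.vecTail, Fin.ext_iff, Matrix.cons_val_two, Matrix.cons_val_three]
    exact Matrix.isUnit_det_of_right_inverse hmul
  · ext i j
    fin_cases i <;> fin_cases j <;>
      simp [Matrix.mul_apply, Fin.sum_univ_four, Matrix.vecHead, Matrix.vecTail,
        Matrix.one_apply] <;>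
      field_simp <;> nlinarith [h3]
  · rw [hsqrt]
    ext i j
    fin_cases i <;> fin_cases j <;>
      simp [Smat, Matrix.mul_apply, Fin.sum_univ_four, Matrix.vecHead, Matrix.vecTail] <;>
      field_simp <;> nlinarith [h3]
  · norm_num [Matrix.cons_val_three]
  · intro h
    have := h 3 3
    norm_num [Real.sign, Matrix.cons_val_three] at this
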